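/- (Discrete Gagliardo–Nirenberg–Sobolev inequality on ℤⁿ) Let n ≥ 2, q > 1, γ ≥ q, and q' = q/(q−1). There exists a constant C = C(q, n, γ) such that for every u ∈ l^q(ℤⁿ), ‖u‖_{l^{γn/(n−1)}}^γ ≤ C·|u|_{1,q}·‖u‖_{l^{(γ−1)q'}}^{γ−1}, where |u|_{1,q} = (Σ_{x∈ℤⁿ}Σ_{y∼x}|u(y)−u(x)|^q)^{1/q}. -/

import Mathlib

open Finset

noncomputable section

/-- Vertices of the lattice graph `ℤⁿ`. -/
abbrev LV (n : ℕ) := Fin n → ℤ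

/-- The set of neighbors of a vertex `x` in the lattice graph `ℤⁿ`
(the points differing from `x` by `±1` in exactly one coordinate). -/
def latNbrs {n : ℕ} (x : LV n) : Finset (LV n) :=
  Finset.image (fun p : Fin n × Bool =>
    Function.update x p.1 (x p.1 + (if p.2 then 1 else -1))) Finset.univ

/-- The graph Laplacian on `ℤⁿ`: `Δu(x) = Σ_{y∼x} (u(y) - u(x))`. -/
def latLap {n : ℕ} (u : LV n → ℝ) (x : LV n) : ℝ :=
  ∑ y ∈ latNbrs x, (u y - u x)

/-- The boundary `∂Ω = {y ∉ Ω : ∃ x ∈ Ω, y ∼ x}` of a finite set `Ω ⊂ ℤⁿ`. -/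
def latBdry {n : ℕ} (Ω : Finset (LV n)) : Finset (LV n) :=
  Ω.biUnion latNbrs \ Ω

/-- The closure `Ω̄ = Ω ∪ ∂Ω`. -/
def latClosure {n : ℕ} (Ω : Finset (LV n)) : Finset (LV n) :=
  Ω ∪ latBdry Ω

/-- The bilinear Dirichlet form
`E_Ω(u,v) = (1/2) Σ_{x,y ∈ Ω̄, x∼y} (u(y)-u(x))(v(y)-v(x))`. -/
def latEnergy {n : ℕ} (Ω : Finset (LV n)) (u v : LV n → ℝ) : ℝ :=
  (1 / 2) * ∑ x ∈ latClosure Ω, ∑ y ∈ latNbrs x ∩ latClosure Ω,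
    (u y - u x) * (v y - v x)

/-- The source term `h = 4π Σ_{j=1}^M n_j δ_{p_j}`. -/
def chernH {n M : ℕ} (nj : Fin M → ℕ) (pts : Fin M → LV n) (x : LV n) : ℝ :=
  4 * Real.pi * ∑ j, (nj j : ℝ) * (if x = pts j then 1 else 0)

/-- The `l^r` norm `(Σ_{x∈ℤⁿ} |u(x)|^r)^{1/r}` with respect to counting measure. -/
def lnorm {n : ℕ} (u : LV n → ℝ) (r : ℝ) : ℝ :=
  (∑' x : LV n, |u x| ^ r) ^ (1 / r)

/-- The discrete `W^{1,q}` gradient seminorm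
`|u|_{1,q} = (Σ_{x∈ℤⁿ} Σ_{y∼x} |u(y)-u(x)|^q)^{1/q}`. -/
def semiNorm1 {n : ℕ} (u : LV n → ℝ) (q : ℝ) : ℝ :=
  (∑' x : LV n, ∑ y ∈ latNbrs x, |u y - u x| ^ q) ^ (1 / q)

open MeasureTheory Finset
open scoped ENNReal NNReal

variable {α : Type*}

/-- ℓ^q ⊂ ℓ^r for q ≤ r (counting measure). -/
lemma summable_rpow_mono {u : α → ℝ} {q r : ℝ} (hq : 0 < q) (hqr : q ≤ r)
    (hu : Summable fun x => |u x| ^ q) : Summable fun x => |u x| ^ r := by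
  set T := ∑' x, |u x| ^ q with hT
  have hub : ∀ x, |u x| ^ q ≤ T := fun x =>
    Summable.le_tsum hu x (fun y _ => Real.rpow_nonneg (abs_nonneg _) _)
  set M : ℝ := max 1 (T ^ ((r - q) / q)) with hM
  have hle : ∀ x, |u x| ^ r ≤ M * |u x| ^ q := ?_
  · exact Summable.of_nonneg_of_le (fun x => Real.rpow_nonneg (abs_nonneg _) _) hle
      (hu.mul_left M)
  intro x
  have hxq : (0:ℝ) ≤ |u x| := abs_nonneg _
  have : |u x| ^ r = |u x| ^ (r - q) * |u x| ^ q := by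
    rw [← Real.rpow_add' hxq (by intro h; nlinarith [hq] : r - q + q ≠ 0)]
    ring_nf
  rw [this]
  apply mul_le_mul_of_nonneg_right _ (Real.rpow_nonneg hxq _)
  rcases le_total (|u x|) 1 with h|h
  · calc |u x| ^ (r - q) ≤ 1 ^ (r - q) :=
        Real.rpow_le_rpow hxq h (by linarith)
      _ ≤ M := by rw [Real.one_rpow]; exact le_max_left _ _
  · have h1 : |u x| ^ (r - q) = (|u x| ^ q) ^ ((r - q)/q) := by
      rw [← Real.rpow_mul hxq]
      congr 1
      field_simp
    rw [h1]
    calc (|u x| ^ q) ^ ((r - q)/q) ≤ T ^ ((r - q)/q) :=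
        Real.rpow_le_rpow (Real.rpow_nonneg hxq _) (hub x) (div_nonneg (by linarith) hq.le)
      _ ≤ M := le_max_right _ _

lemma rpow_sub_rpow_le {γ : ℝ} (hγ : 1 ≤ γ) {a b : ℝ} (hb : 0 ≤ b) (hba : b ≤ a) :
    a ^ γ - b ^ γ ≤ γ * a ^ (γ - 1) * (a - b) := by
  have ha : 0 ≤ a := hb.trans hba
  rcases eq_or_lt_of_le ha with h|hapos
  · have hb0 : b = 0 := le_antisymm (hba.trans h.symm.le) hb
    subst hb0
    rw [← h]
    simp [Real.zero_rpow (by linarith : γ ≠ 0)]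
  · have hs : -1 ≤ b / a - 1 := by
      have : 0 ≤ b / a := div_nonneg hb hapos.le
      linarith
    have h1 := one_add_mul_self_le_rpow_one_add hs hγ
    rw [add_sub_cancel] at h1
    have hpow : (b / a) ^ γ * a ^ γ = b ^ γ := by
      rw [Real.div_rpow hb hapos.le]
      field_simp
    have h2 : (1 + γ * (b / a - 1)) * a ^ γ ≤ b ^ γ := by
      calc (1 + γ * (b / a - 1)) * a ^ γ ≤ (b / a) ^ γ * a ^ γ :=
            mul_le_mul_of_nonneg_right h1 (Real.rpow_nonneg hapos.le _)
        _ = b ^ γ := hpow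
    have key : a ^ γ = a * a ^ (γ - 1) := by
      rw [← Real.rpow_one_add' (by positivity) (by intro hh; linarith)]
      ring_nf
    have h3 : b / a * a ^ γ = b * a ^ (γ - 1) := by
      rw [key]; field_simp
    nlinarith [h2, h3, key]

lemma abs_rpow_sub_abs_rpow_le {γ : ℝ} (hγ : 1 ≤ γ) (A B : ℝ) :
    abs (|A| ^ γ - |B| ^ γ) ≤ γ * (|A| ^ (γ - 1) + |B| ^ (γ - 1)) * |A - B| := by
  have main : ∀ X Y : ℝ, |Y| ≤ |X| →
      abs (|X| ^ γ - |Y| ^ γ) ≤ γ * (|X| ^ (γ - 1) + |Y| ^ (γ - 1)) * |X - Y| := by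
    intro X Y hXY
    have h1 : |Y| ^ γ ≤ |X| ^ γ := Real.rpow_le_rpow (abs_nonneg _) hXY (by linarith)
    rw [abs_of_nonneg (by linarith)]
    calc |X| ^ γ - |Y| ^ γ ≤ γ * |X| ^ (γ - 1) * (|X| - |Y|) :=
          rpow_sub_rpow_le hγ (abs_nonneg _) hXY
      _ ≤ γ * (|X| ^ (γ - 1) + |Y| ^ (γ - 1)) * |X - Y| := by
          apply mul_le_mul
          · have : (0:ℝ) ≤ |Y| ^ (γ - 1) := Real.rpow_nonneg (abs_nonneg _) _
            nlinarith [Real.rpow_nonneg (abs_nonneg X) (γ - 1)]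
          · exact abs_sub_abs_le_abs_sub _ _
          · linarith
          · positivity
  rcases le_total |B| |A| with h|h
  · exact main A B h
  · have := main B A h
    rw [abs_sub_comm, abs_sub_comm A B]
    calc abs (|B| ^ γ - |A| ^ γ) ≤ γ * (|B| ^ (γ - 1) + |A| ^ (γ - 1)) * |B - A| := this
      _ = γ * (|A| ^ (γ - 1) + |B| ^ (γ - 1)) * |B - A| := by ring

instance : SigmaFinite (Measure.count : Measure ℤ) := by
  apply Measure.sigmaFinite_of_countable (S := Set.range (fun k : ℤ => ({k} : Set ℤ)))
  · exact Set.countable_range _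
  · rintro s ⟨k, rfl⟩; simp [Measure.count_singleton]
  · ext k; simp

lemma pi_count (n : ℕ) :
    Measure.pi (fun _ : Fin n => (Measure.count : Measure ℤ)) = Measure.count := by
  apply MeasureTheory.Measure.ext_of_singleton
  intro x
  have h : ({x} : Set (LV n)) = Set.pi Set.univ (fun i => {x i}) := by
    ext y; simp [funext_iff, Set.mem_pi]
  rw [Measure.count_singleton, h, Measure.pi_pi]
  simp [Measure.count_singleton]

/-- `nbr x j b` is the neighbor of `x` in direction `j`, forward iff `b`. -/
def nbr {n : ℕ} (x : LV n) (j : Fin n) (b : Bool) : LV n :=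
  Function.update x j (x j + (if b then 1 else -1))

lemma nbr_eq_add {n : ℕ} (x : LV n) (j : Fin n) (b : Bool) :
    nbr x j b = x + Pi.single j (if b then 1 else -1) := by
  funext i
  by_cases h : i = j
  · subst h; simp [nbr]
  · simp [nbr, Function.update_apply, Pi.single_apply, h]

lemma nbr_mem {n : ℕ} (x : LV n) (j : Fin n) (b : Bool) : nbr x j b ∈ latNbrs x := by
  simp only [latNbrs, Finset.mem_image]
  exact ⟨(j, b), Finset.mem_univ _, rfl⟩

lemma sum_latNbrs {n : ℕ} (x : LV n) {M : Type*} [AddCommMonoid M] (f : LV n → M) :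
    ∑ y ∈ latNbrs x, f y = ∑ p : Fin n × Bool, f (nbr x p.1 p.2) := by
  have hinj : ∀ p ∈ (Finset.univ : Finset (Fin n × Bool)), ∀ p' ∈ Finset.univ,
      Function.update x p.1 (x p.1 + (if p.2 then 1 else -1)) =
        Function.update x p'.1 (x p'.1 + (if p'.2 then 1 else -1)) → p = p' := by
   rintro ⟨j, b⟩ _ ⟨j', b'⟩ _ h
   have h1 : ∀ i, Function.update x j (x j + (if b then 1 else -1)) i =
       Function.update x j' (x j' + (if b' then 1 else -1)) i := fun i => by rw [h]
   have hj : j = j' := by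
     by_contra hne
     have := h1 j
     rw [Function.update_self, Function.update_of_ne (fun hh => hne hh)] at this
     rcases b with _|_ <;> simp at this <;> omega
   subst hj
   have := h1 j
   rw [Function.update_self, Function.update_self] at this
   rcases b with _|_ <;> rcases b' with _|_ <;> simp at this ⊢ <;> omega
  rw [latNbrs, Finset.sum_image hinj]
  rfl

/-- 1D telescoping: `w a ≤ Σ_t |w(t+1) - w t|` for nonneg summable `w`. -/
lemma oneD_telescope (w : ℤ → ℝ) (hsum : Summable w) (a : ℤ) :
    ENNReal.ofReal (w a) ≤ ∑' t : ℤ, ENNReal.ofReal |w (t + 1) - w t| := by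
  apply ENNReal.le_of_forall_pos_le_add
  intro ε hε _
  have hinj : Function.Injective (fun N : ℕ => a + N + 1) := by
    intro N M h; simpa [add_assoc, add_left_cancel_iff] using h
  have htend : Filter.Tendsto (fun N : ℕ => w (a + N + 1)) Filter.atTop (nhds 0) :=
    (hsum.comp_injective hinj).tendsto_atTop_zero
  have hev : ∀ᶠ N : ℕ in Filter.atTop, w (a + N + 1) < ε :=
    htend.eventually (gt_mem_nhds (by exact_mod_cast hε))
  obtain ⟨N, hN⟩ := hev.exists
  -- real telescoping
  have htel : w a ≤ w (a + N + 1) + ∑ k ∈ Finset.range (N + 1), |w (a + k + 1) - w (a + k)| := by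
    have h1 : ∑ k ∈ Finset.range (N + 1), (w (a + k) - w (a + (k + 1 : ℕ))) = w a - w (a + (N + 1 : ℕ)) := by
      simpa using Finset.sum_range_sub' (fun k : ℕ => w (a + k)) (N + 1)
    have h2 : w a - w (a + N + 1) ≤ ∑ k ∈ Finset.range (N + 1), |w (a + k + 1) - w (a + k)| := by
      have : w a - w (a + N + 1) = ∑ k ∈ Finset.range (N + 1), (w (a + k) - w (a + (k + 1 : ℕ))) := by
        rw [h1]; push_cast; ring_nf
      rw [this]
      apply Finset.sum_le_sum
      intro k _
      rw [abs_sub_comm]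
      push_cast
      rw [add_assoc]; apply le_abs_self
    linarith
  calc ENNReal.ofReal (w a)
      ≤ ENNReal.ofReal (w (a + N + 1) + ∑ k ∈ Finset.range (N + 1), |w (a + k + 1) - w (a + k)|) :=
        ENNReal.ofReal_le_ofReal htel
    _ ≤ ENNReal.ofReal (w (a + N + 1)) + ENNReal.ofReal (∑ k ∈ Finset.range (N + 1), |w (a + k + 1) - w (a + k)|) :=
        ENNReal.ofReal_add_le
    _ ≤ (∑' t : ℤ, ENNReal.ofReal |w (t + 1) - w t|) + ε := by
        rw [add_comm]
        gcongr
        · rw [ENNReal.ofReal_sum_of_nonneg (fun k _ => abs_nonneg _)]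
          have hre : ∀ k : ℕ, ENNReal.ofReal |w (a + k + 1) - w (a + k)| =
              (fun t : ℤ => ENNReal.ofReal |w (t + 1) - w t|) (a + k) := by intro k; rfl
          calc ∑ k ∈ Finset.range (N + 1), ENNReal.ofReal |w (a + k + 1) - w (a + k)|
              = ∑ t ∈ (Finset.range (N + 1)).image (fun k : ℕ => a + (k : ℤ)),
                  ENNReal.ofReal |w (t + 1) - w t| := by
                rw [Finset.sum_image (by intro b _ c _ h; exact_mod_cast add_left_cancel h)]
            _ ≤ ∑' t : ℤ, ENNReal.ofReal |w (t + 1) - w t| := ENNReal.sum_le_tsum _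
        · exact (ENNReal.ofReal_le_ofReal hN.le).trans (by simp)

/-- gradient sum -/
def latGrad {n : ℕ} (v : LV n → ℝ) (x : LV n) : ℝ := ∑ y ∈ latNbrs x, |v y - v x|

lemma latGrad_nonneg {n : ℕ} (v : LV n → ℝ) (x : LV n) : 0 ≤ latGrad v x :=
  Finset.sum_nonneg fun _ _ => abs_nonneg _

lemma point_le_line {n : ℕ} (v : LV n → ℝ) (hs : Summable v) (x : LV n) (i : Fin n) :
    ENNReal.ofReal (v x) ≤ ∑' t : ℤ, ENNReal.ofReal (latGrad v (Function.update x i t)) := by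
  have hw : Summable (fun t : ℤ => v (Function.update x i t)) :=
    hs.comp_injective (Function.update_injective x i)
  have h0 := oneD_telescope (fun t : ℤ => v (Function.update x i t)) hw (x i)
  simp only [Function.update_eq_self] at h0
  calc ENNReal.ofReal (v x)
      ≤ ∑' t : ℤ, ENNReal.ofReal |v (Function.update x i (t + 1)) - v (Function.update x i t)| := h0
    _ ≤ ∑' t : ℤ, ENNReal.ofReal (latGrad v (Function.update x i t)) := by
        apply ENNReal.tsum_le_tsum
        intro t
        apply ENNReal.ofReal_le_ofReal
        have hmem : Function.update x i (t + 1) ∈ latNbrs (Function.update x i t) := by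
          have : Function.update x i (t + 1) = nbr (Function.update x i t) i true := by
            simp [nbr, Function.update_idem]
          rw [this]; exact nbr_mem _ _ _
        exact Finset.single_le_sum (f := fun y => |v y - v (Function.update x i t)|)
          (fun y _ => abs_nonneg _) hmem

lemma discrete_sobolev {n : ℕ} (hn : 2 ≤ n) (v : LV n → ℝ) (hs : Summable v) :
    ∑' x : LV n, ENNReal.ofReal (v x) ^ ((n : ℝ) / ((n : ℝ) - 1))
      ≤ (∑' x : LV n, ENNReal.ofReal (latGrad v x)) ^ ((n : ℝ) / ((n : ℝ) - 1)) := by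
  classical
  set p : ℝ := (n : ℝ) / ((n : ℝ) - 1) with hp_def
  have hn1 : (1 : ℝ) < n := by exact_mod_cast hn.trans_lt' one_lt_two
  have hn1' : (0 : ℝ) < (n : ℝ) - 1 := by linarith
  have hcard : ((Fintype.card (Fin n)) : ℝ) = (n : ℝ) := by simp
  have hp : Real.HolderConjugate (Fintype.card (Fin n)) p := by
    rw [hcard]
    exact Real.HolderConjugate.conjExponent hn1
  set μ : Fin n → Measure ℤ := fun _ => Measure.count with hμ
  have hπ : Measure.pi μ = (Measure.count : Measure (LV n)) := pi_count n
  set F : LV n → ℝ≥0∞ := fun x => ENNReal.ofReal (latGrad v x) with hF_def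
  have hF : Measurable F := measurable_of_countable _
  calc ∑' x : LV n, ENNReal.ofReal (v x) ^ p
      = ∫⁻ x, ENNReal.ofReal (v x) ^ p ∂(Measure.pi μ) := by
        rw [hπ, lintegral_count]
    _ = ∫⁻ x, ∏ _i : Fin n, (ENNReal.ofReal (v x)) ^ ((1:ℝ) / ((n:ℝ) - 1)) ∂(Measure.pi μ) := by
        congr 1; funext x
        rw [Finset.prod_const, Finset.card_univ, Fintype.card_fin, ← ENNReal.rpow_natCast _ n,
          ← ENNReal.rpow_mul]
        rw [hp_def]
        field_simp
    _ ≤ ∫⁻ x, ∏ i : Fin n, (∫⁻ t, F (Function.update x i t) ∂(μ i)) ^ ((1:ℝ) / ((n:ℝ) - 1))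
          ∂(Measure.pi μ) := by
        apply lintegral_mono
        intro x
        apply Finset.prod_le_prod'
        intro i _
        gcongr
        rw [lintegral_count]
        exact point_le_line v hs x i
    _ ≤ (∫⁻ x, F x ∂(Measure.pi μ)) ^ p := by
        have := MeasureTheory.lintegral_prod_lintegral_pow_le μ hp hF
        rw [hcard] at this
        exact this
    _ = (∑' x : LV n, ENNReal.ofReal (latGrad v x)) ^ p := by rw [hπ, lintegral_count]



lemma enn_add_rpow_le (a b : ℝ≥0∞) {r : ℝ} (hr : 0 ≤ r) :
    (a + b) ^ r ≤ 2 ^ r * (a ^ r + b ^ r) := by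
  have h1 : a + b ≤ 2 * (a ⊔ b) := by
    rw [two_mul]; exact add_le_add le_sup_left le_sup_right
  calc (a + b) ^ r ≤ (2 * (a ⊔ b)) ^ r := ENNReal.rpow_le_rpow h1 hr
    _ = 2 ^ r * (a ⊔ b) ^ r := ENNReal.mul_rpow_of_nonneg _ _ hr
    _ ≤ 2 ^ r * (a ^ r + b ^ r) := by
        gcongr
        rcases le_total a b with h|h
        · rw [sup_eq_right.2 h]; exact le_add_self
        · rw [sup_eq_left.2 h]; exact le_self_add

lemma abs_sub_rpow_le {q : ℝ} (hq : 0 ≤ q) (A B : ℝ) :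
    |A - B| ^ q ≤ 2 ^ q * (|A| ^ q + |B| ^ q) := by
  have h1 : |A - B| ≤ 2 * (|A| ⊔ |B|) := by
    have := abs_sub A B
    have h2 : |A| ≤ |A| ⊔ |B| := le_sup_left
    have h3 : |B| ≤ |A| ⊔ |B| := le_sup_right
    linarith
  calc |A - B| ^ q ≤ (2 * (|A| ⊔ |B|)) ^ q := Real.rpow_le_rpow (abs_nonneg _) h1 hq
    _ = 2 ^ q * (|A| ⊔ |B|) ^ q := Real.mul_rpow (by norm_num) (le_trans (abs_nonneg _) le_sup_left)
    _ ≤ 2 ^ q * (|A| ^ q + |B| ^ q) := by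
        apply mul_le_mul_of_nonneg_left _ (by positivity)
        rcases le_total |A| |B| with h|h
        · rw [sup_eq_right.2 h]
          have : (0:ℝ) ≤ |A| ^ q := Real.rpow_nonneg (abs_nonneg _) _
          linarith
        · rw [sup_eq_left.2 h]
          have : (0:ℝ) ≤ |B| ^ q := Real.rpow_nonneg (abs_nonneg _) _
          linarith

lemma summable_nbr_comp {n : ℕ} {g : LV n → ℝ} (hg : Summable g) (j : Fin n) (b : Bool) :
    Summable fun x : LV n => g (nbr x j b) := by
  have h := (Equiv.addRight (Pi.single j (if b then 1 else -1) : LV n)).summable_iff (f := g)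
  exact (h.2 hg).congr fun x => (congrArg g (nbr_eq_add x j b)).symm

lemma summable_grad {n : ℕ} {u : LV n → ℝ} {q : ℝ} (hq : 0 ≤ q)
    (hu : Summable fun x => |u x| ^ q) :
    Summable fun x : LV n => ∑ y ∈ latNbrs x, |u y - u x| ^ q := by
  have hrw : (fun x : LV n => ∑ y ∈ latNbrs x, |u y - u x| ^ q)
      = fun x => ∑ pr : Fin n × Bool, |u (nbr x pr.1 pr.2) - u x| ^ q := by
    funext x; exact sum_latNbrs x _
  rw [hrw]
  apply summable_sum
  intro pr _
  have htrans : Summable fun x : LV n => |u (nbr x pr.1 pr.2)| ^ q :=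
    summable_nbr_comp hu pr.1 pr.2
  have hle : ∀ x : LV n, |u (nbr x pr.1 pr.2) - u x| ^ q
      ≤ 2 ^ q * (|u (nbr x pr.1 pr.2)| ^ q + |u x| ^ q) := fun x => abs_sub_rpow_le hq _ _
  exact Summable.of_nonneg_of_le (fun x => Real.rpow_nonneg (abs_nonneg _) _) hle
    ((htrans.add hu).mul_left _)

lemma GNS_master {n : ℕ} (hn : 2 ≤ n) {q γ : ℝ} (hq : 1 < q) (hγ : q ≤ γ)
    (u : LV n → ℝ) (hu : Summable fun x => |u x| ^ q) :
    (∑' x : LV n, ENNReal.ofReal (|u x| ^ (γ * ((n : ℝ) / ((n : ℝ) - 1))))) ^ (((n : ℝ) - 1) / (n : ℝ))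
      ≤ (ENNReal.ofReal γ ^ (q / (q - 1)) * 2 ^ (q / (q - 1)) * (4 * n)) ^ ((q - 1) / q)
          * (∑' x : LV n, ENNReal.ofReal (∑ y ∈ latNbrs x, |u y - u x| ^ q)) ^ (1 / q)
          * (∑' x : LV n, ENNReal.ofReal (|u x| ^ ((γ - 1) * (q / (q - 1))))) ^ ((q - 1) / q) := by
  classical
  have hq0 : (0:ℝ) < q := lt_trans one_pos hq
  have hγ1 : (1:ℝ) < γ := lt_of_lt_of_le hq hγ
  have hγ0 : (0:ℝ) < γ - 1 := by linarith
  set q' : ℝ := q / (q - 1) with hq'def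
  have hconj : q.HolderConjugate q' := Real.HolderConjugate.conjExponent hq
  have hq'0 : (0:ℝ) < q' := hconj.symm.pos
  have hn1 : (1:ℝ) < (n:ℝ) := by exact_mod_cast lt_of_lt_of_le one_lt_two hn
  have hnn : (0:ℝ) < (n:ℝ) - 1 := by linarith
  set p : ℝ := (n:ℝ) / ((n:ℝ) - 1) with hpdef
  have hp0 : (0:ℝ) < p := by positivity
  have hpinv : 1 / p = ((n:ℝ) - 1) / (n:ℝ) := one_div_div _ _
  have hq'inv : 1 / q' = (q - 1) / q := one_div_div _ _
  set s : ℝ := (γ - 1) * q' with hsdef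
  set v : LV n → ℝ := fun x => |u x| ^ γ with hvdef
  have hv0 : ∀ x, 0 ≤ v x := fun x => Real.rpow_nonneg (abs_nonneg _) _
  have hvs : Summable v := summable_rpow_mono hq0 hγ hu
  set Y : ℝ≥0∞ := ∑' x : LV n, ENNReal.ofReal (|u x| ^ s) with hYdef
  set SNE : ℝ≥0∞ := ∑' x : LV n, ENNReal.ofReal (∑ y ∈ latNbrs x, |u y - u x| ^ q) with hSNEdef
  set G : ℝ≥0∞ := ∑' x : LV n, ENNReal.ofReal (latGrad v x) with hGdef
  -- the pair space
  set A : LV n × (Fin n × Bool) → ℝ≥0∞ := fun z =>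
    ENNReal.ofReal γ * (ENNReal.ofReal |u (nbr z.1 z.2.1 z.2.2)| ^ (γ - 1)
      + ENNReal.ofReal |u z.1| ^ (γ - 1)) with hAdef
  set B : LV n × (Fin n × Bool) → ℝ≥0∞ := fun z =>
    ENNReal.ofReal |u (nbr z.1 z.2.1 z.2.2) - u z.1| with hBdef
  -- Step A + Sobolev
  have stepA : (∑' x : LV n, ENNReal.ofReal (|u x| ^ (γ * p))) ^ (1 / p) ≤ G := by
    have hrw : (fun x : LV n => ENNReal.ofReal (|u x| ^ (γ * p)))
        = fun x => ENNReal.ofReal (v x) ^ p := by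
      funext x
      rw [ENNReal.ofReal_rpow_of_nonneg (hv0 x) hp0.le, hvdef]
      congr 1
      rw [← Real.rpow_mul (abs_nonneg _)]
    rw [hrw]
    calc (∑' x : LV n, ENNReal.ofReal (v x) ^ p) ^ (1 / p)
        ≤ (G ^ p) ^ (1 / p) :=
          ENNReal.rpow_le_rpow (discrete_sobolev hn v hvs) (by positivity)
      _ = G := by
          rw [← ENNReal.rpow_mul, mul_one_div, div_self hp0.ne', ENNReal.rpow_one]
  -- Step B: pointwise bound of the gradient
  have stepB : G ≤ ∑' z : LV n × (Fin n × Bool), A z * B z := by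
    rw [ENNReal.tsum_prod']
    apply ENNReal.tsum_le_tsum
    intro x
    rw [tsum_fintype]
    have h1 : latGrad v x = ∑ pr : Fin n × Bool, |v (nbr x pr.1 pr.2) - v x| :=
      sum_latNbrs x _
    rw [h1, ENNReal.ofReal_sum_of_nonneg (fun pr _ => abs_nonneg _)]
    apply Finset.sum_le_sum
    intro pr _
    have hreal := abs_rpow_sub_abs_rpow_le hγ1.le (u (nbr x pr.1 pr.2)) (u x)
    calc ENNReal.ofReal |v (nbr x pr.1 pr.2) - v x|
        ≤ ENNReal.ofReal (γ * (|u (nbr x pr.1 pr.2)| ^ (γ - 1) + |u x| ^ (γ - 1))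
            * |u (nbr x pr.1 pr.2) - u x|) := ENNReal.ofReal_le_ofReal hreal
      _ = A (x, pr) * B (x, pr) := by
          rw [ENNReal.ofReal_mul (by positivity), ENNReal.ofReal_mul (by positivity)]
          rw [hAdef, hBdef]
          congr 1
          rw [ENNReal.ofReal_add (by positivity) (by positivity),
            ← ENNReal.ofReal_rpow_of_nonneg (abs_nonneg _) (by linarith),
            ← ENNReal.ofReal_rpow_of_nonneg (abs_nonneg _) (by linarith)]
  -- Step C: Hölder
  have stepC : ∑' z : LV n × (Fin n × Bool), A z * B z
      ≤ (∑' z : LV n × (Fin n × Bool), A z ^ q') ^ (1 / q')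
        * (∑' z : LV n × (Fin n × Bool), B z ^ q) ^ (1 / q) := by
    have hh := ENNReal.lintegral_mul_le_Lp_mul_Lq (Measure.count)
      hconj.symm (measurable_of_countable A).aemeasurable (measurable_of_countable B).aemeasurable
    simpa only [Pi.mul_apply, lintegral_count] using hh
  -- Step D: bound the A-factor
  have stepD : ∑' z : LV n × (Fin n × Bool), A z ^ q'
      ≤ ENNReal.ofReal γ ^ q' * 2 ^ q' * (4 * n) * Y := by
    have hptwise : ∀ z : LV n × (Fin n × Bool), A z ^ q'
        ≤ ENNReal.ofReal γ ^ q' * 2 ^ q'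
          * (ENNReal.ofReal (|u (nbr z.1 z.2.1 z.2.2)| ^ s) + ENNReal.ofReal (|u z.1| ^ s)) := by
      intro z
      rw [hAdef]
      rw [ENNReal.mul_rpow_of_nonneg _ _ hq'0.le]
      rw [mul_assoc]
      apply mul_le_mul_right
      calc (ENNReal.ofReal |u (nbr z.1 z.2.1 z.2.2)| ^ (γ - 1)
            + ENNReal.ofReal |u z.1| ^ (γ - 1)) ^ q'
          ≤ 2 ^ q' * ((ENNReal.ofReal |u (nbr z.1 z.2.1 z.2.2)| ^ (γ - 1)) ^ q'
            + (ENNReal.ofReal |u z.1| ^ (γ - 1)) ^ q') := enn_add_rpow_le _ _ hq'0.le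
        _ = 2 ^ q' * (ENNReal.ofReal (|u (nbr z.1 z.2.1 z.2.2)| ^ s)
            + ENNReal.ofReal (|u z.1| ^ s)) := by
            rw [← ENNReal.rpow_mul, ← ENNReal.rpow_mul, ← hsdef,
              ENNReal.ofReal_rpow_of_nonneg (abs_nonneg _) (by positivity),
              ENNReal.ofReal_rpow_of_nonneg (abs_nonneg _) (by positivity)]
    calc ∑' z : LV n × (Fin n × Bool), A z ^ q'
        ≤ ∑' z : LV n × (Fin n × Bool), ENNReal.ofReal γ ^ q' * 2 ^ q'
            * (ENNReal.ofReal (|u (nbr z.1 z.2.1 z.2.2)| ^ s) + ENNReal.ofReal (|u z.1| ^ s)) :=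
          ENNReal.tsum_le_tsum hptwise
      _ = ENNReal.ofReal γ ^ q' * 2 ^ q'
          * ∑' z : LV n × (Fin n × Bool),
            (ENNReal.ofReal (|u (nbr z.1 z.2.1 z.2.2)| ^ s) + ENNReal.ofReal (|u z.1| ^ s)) := by
          rw [ENNReal.tsum_mul_left]
      _ ≤ ENNReal.ofReal γ ^ q' * 2 ^ q' * ((4 * n) * Y) := by
          apply mul_le_mul_right
          rw [ENNReal.tsum_add]
          have hYnbr : ∀ pr : Fin n × Bool,
              (∑' x : LV n, ENNReal.ofReal (|u (nbr x pr.1 pr.2)| ^ s)) = Y := by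
            intro pr
            rw [hYdef]
            have he := (Equiv.addRight (Pi.single pr.1 (if pr.2 then 1 else -1) : LV n)).tsum_eq
              (f := fun x : LV n => ENNReal.ofReal (|u x| ^ s))
            rw [← he]
            congr 1
            funext x
            simp only [Equiv.coe_addRight]
            rw [← nbr_eq_add]
          have hcard : (Fintype.card (Fin n × Bool) : ℝ≥0∞) = 2 * n := by
            simp [Fintype.card_prod]
            ring
          have hyy : ∑' z : LV n × (Fin n × Bool), ENNReal.ofReal (|u (nbr z.1 z.2.1 z.2.2)| ^ s)
              = (2 * n) * Y := by
            rw [ENNReal.tsum_prod']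
            simp_rw [tsum_fintype]
            rw [Summable.tsum_finsetSum (fun pr _ => ENNReal.summable)]
            simp_rw [hYnbr]
            rw [Finset.sum_const, Finset.card_univ, nsmul_eq_mul, hcard]
          have hxx : ∑' z : LV n × (Fin n × Bool), ENNReal.ofReal (|u z.1| ^ s)
              = (2 * n) * Y := by
            rw [ENNReal.tsum_prod']
            simp_rw [tsum_fintype, Finset.sum_const, Finset.card_univ, nsmul_eq_mul, hcard]
            rw [ENNReal.tsum_mul_left]
          rw [hyy, hxx]
          have : ((4:ℝ≥0∞) * n) * Y = (2*n)*Y + (2*n)*Y := by ring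
          rw [this]
      _ = ENNReal.ofReal γ ^ q' * 2 ^ q' * (4 * n) * Y := by ring
  -- Step E: identify the B-factor
  have stepE : ∑' z : LV n × (Fin n × Bool), B z ^ q = SNE := by
    rw [hSNEdef, ENNReal.tsum_prod']
    congr 1
    funext x
    rw [tsum_fintype]
    have h1 : (∑ y ∈ latNbrs x, |u y - u x| ^ q)
        = ∑ pr : Fin n × Bool, |u (nbr x pr.1 pr.2) - u x| ^ q := sum_latNbrs x _
    rw [h1, ENNReal.ofReal_sum_of_nonneg (fun pr _ => Real.rpow_nonneg (abs_nonneg _) _)]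
    congr 1
    funext pr
    rw [hBdef, ENNReal.ofReal_rpow_of_nonneg (abs_nonneg _) hq0.le]
  -- assemble
  rw [← hpinv, ← hq'inv]
  calc (∑' x : LV n, ENNReal.ofReal (|u x| ^ (γ * p))) ^ (1 / p)
      ≤ G := stepA
    _ ≤ ∑' z : LV n × (Fin n × Bool), A z * B z := stepB
    _ ≤ (∑' z : LV n × (Fin n × Bool), A z ^ q') ^ (1 / q')
        * (∑' z : LV n × (Fin n × Bool), B z ^ q) ^ (1 / q) := stepC
    _ ≤ (ENNReal.ofReal γ ^ q' * 2 ^ q' * (4 * n) * Y) ^ (1 / q') * SNE ^ (1 / q) := by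
        rw [stepE]
        gcongr
    _ = (ENNReal.ofReal γ ^ q' * 2 ^ q' * (4 * n)) ^ (1 / q') * SNE ^ (1 / q) * Y ^ (1 / q') := by
        rw [ENNReal.mul_rpow_of_nonneg _ _ (by positivity)]
        ring


/-- Discrete Gagliardo–Nirenberg–Sobolev inequality on `ℤⁿ`: for `n ≥ 2`, `q > 1`,
`γ ≥ q` and `q' = q/(q-1)` there is a constant `C = C(q,n,γ)` such that for every
`u ∈ l^q(ℤⁿ)`:
`‖u‖_{l^{γn/(n-1)}}^γ ≤ C |u|_{1,q} ‖u‖_{l^{(γ-1)q'}}^{γ-1}`. -/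
theorem discrete_GNS (n : ℕ) (hn : 2 ≤ n) (q γ : ℝ) (hq : 1 < q) (hγ : q ≤ γ) :
    ∃ C : ℝ, 0 < C ∧ ∀ u : LV n → ℝ, Summable (fun x => |u x| ^ q) →
      lnorm u (γ * n / (n - 1)) ^ γ
        ≤ C * semiNorm1 u q * lnorm u ((γ - 1) * (q / (q - 1))) ^ (γ - 1) := by
  classical
  have hq0 : (0:ℝ) < q := lt_trans one_pos hq
  have hγ1 : (1:ℝ) < γ := lt_of_lt_of_le hq hγ
  have hγ0 : (0:ℝ) < γ - 1 := by linarith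
  have hq1 : (0:ℝ) < q - 1 := by linarith
  set q' : ℝ := q / (q - 1) with hq'def
  have hq'0 : (0:ℝ) < q' := by positivity
  set sP : ℝ := (γ - 1) * q' with hsdef
  have hn1 : (1:ℝ) < (n:ℝ) := by exact_mod_cast lt_of_lt_of_le one_lt_two hn
  have hnn : (0:ℝ) < (n:ℝ) - 1 := by linarith
  have hn0 : (0:ℝ) < (n:ℝ) := by linarith
  set P : ℝ := γ * (n:ℝ) / ((n:ℝ) - 1) with hPdef
  set K : ℝ≥0∞ := (ENNReal.ofReal γ ^ q' * 2 ^ q' * (4 * n)) ^ ((q - 1) / q) with hKdef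
  have hKfin : K ≠ ⊤ := by
    apply ENNReal.rpow_ne_top_of_nonneg (by positivity)
    apply ENNReal.mul_ne_top
    · apply ENNReal.mul_ne_top
      · exact ENNReal.rpow_ne_top_of_nonneg hq'0.le ENNReal.ofReal_ne_top
      · exact ENNReal.rpow_ne_top_of_nonneg hq'0.le ENNReal.ofNat_ne_top
    · exact ENNReal.mul_ne_top (by norm_num) (ENNReal.natCast_ne_top n)
  refine ⟨K.toReal + 1, by positivity, ?_⟩
  intro u hu
  set C : ℝ := K.toReal + 1 with hCdef
  have hC0 : (0:ℝ) < C := by positivity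
  -- summability
  have hPq : q ≤ P := by
    rw [hPdef]
    calc q ≤ γ := hγ
      _ = γ * 1 := (mul_one γ).symm
      _ ≤ γ * ((n:ℝ) / ((n:ℝ) - 1)) := by
          apply mul_le_mul_of_nonneg_left _ (by linarith)
          rw [le_div_iff₀ hnn]
          linarith
      _ = γ * (n:ℝ) / ((n:ℝ) - 1) := by ring
  have hq_eq : (q - 1) * q' = q := by rw [hq'def]; field_simp
  have hsq : q ≤ sP := by
    rw [hsdef, ← hq_eq]
    apply mul_le_mul_of_nonneg_right (by linarith) hq'0.le
  have hXs : Summable fun x : LV n => |u x| ^ P := summable_rpow_mono hq0 hPq hu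
  have hYs : Summable fun x : LV n => |u x| ^ sP := summable_rpow_mono hq0 hsq hu
  have hSNs : Summable fun x : LV n => ∑ y ∈ latNbrs x, |u y - u x| ^ q :=
    summable_grad hq0.le hu
  set X : ℝ := ∑' x : LV n, |u x| ^ P with hXdef
  set SN : ℝ := ∑' x : LV n, ∑ y ∈ latNbrs x, |u y - u x| ^ q with hSNdef
  set Yr : ℝ := ∑' x : LV n, |u x| ^ sP with hYrdef
  have hX0 : 0 ≤ X := tsum_nonneg fun x => Real.rpow_nonneg (abs_nonneg _) _
  have hSN0 : 0 ≤ SN := tsum_nonneg fun x =>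
    Finset.sum_nonneg fun y _ => Real.rpow_nonneg (abs_nonneg _) _
  have hYr0 : 0 ≤ Yr := tsum_nonneg fun x => Real.rpow_nonneg (abs_nonneg _) _
  -- rewrite the goal in terms of X, SN, Yr
  have e1 : lnorm u P ^ γ = X ^ (((n:ℝ) - 1) / (n:ℝ)) := by
    rw [lnorm, ← hXdef, ← Real.rpow_mul hX0]
    congr 1
    rw [hPdef]
    field_simp
  have e2 : lnorm u sP ^ (γ - 1) = Yr ^ ((q - 1) / q) := by
    rw [lnorm, ← hYrdef, ← Real.rpow_mul hYr0]
    congr 1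
    rw [hsdef, hq'def]
    field_simp
  have e3 : semiNorm1 u q = SN ^ (1 / q) := by rw [semiNorm1, ← hSNdef]
  rw [e1, e3, e2]
  -- ENNReal master inequality, converted
  have master := GNS_master hn hq hγ u hu
  have c1 : (∑' x : LV n, ENNReal.ofReal (|u x| ^ (γ * ((n:ℝ) / ((n:ℝ) - 1)))))
      = ENNReal.ofReal X := by
    rw [hXdef, ENNReal.ofReal_tsum_of_nonneg (fun x => Real.rpow_nonneg (abs_nonneg _) _) hXs]
    congr 1
    funext x
    rw [hPdef, mul_div_assoc]
  have c2 : (∑' x : LV n, ENNReal.ofReal (∑ y ∈ latNbrs x, |u y - u x| ^ q))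
      = ENNReal.ofReal SN := by
    rw [hSNdef, ENNReal.ofReal_tsum_of_nonneg
      (fun x => Finset.sum_nonneg fun y _ => Real.rpow_nonneg (abs_nonneg _) _) hSNs]
  have c3 : (∑' x : LV n, ENNReal.ofReal (|u x| ^ ((γ - 1) * (q / (q - 1)))))
      = ENNReal.ofReal Yr := by
    rw [hYrdef, ENNReal.ofReal_tsum_of_nonneg (fun x => Real.rpow_nonneg (abs_nonneg _) _) hYs]
  rw [c1, c2, c3, ← hKdef] at master
  have hKC : K ≤ ENNReal.ofReal C := by
    rw [← ENNReal.ofReal_toReal hKfin]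
    apply ENNReal.ofReal_le_ofReal
    rw [hCdef]
    linarith
  have final : ENNReal.ofReal (X ^ (((n:ℝ) - 1) / (n:ℝ)))
      ≤ ENNReal.ofReal (C * SN ^ (1 / q) * Yr ^ ((q - 1) / q)) := by
    calc ENNReal.ofReal (X ^ (((n:ℝ) - 1) / (n:ℝ)))
        = (ENNReal.ofReal X) ^ (((n:ℝ) - 1) / (n:ℝ)) := by
          rw [ENNReal.ofReal_rpow_of_nonneg hX0 (by positivity)]
      _ ≤ K * (ENNReal.ofReal SN) ^ (1 / q) * (ENNReal.ofReal Yr) ^ ((q - 1) / q) := master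
      _ ≤ ENNReal.ofReal C * (ENNReal.ofReal SN) ^ (1 / q)
            * (ENNReal.ofReal Yr) ^ ((q - 1) / q) := by gcongr
      _ = ENNReal.ofReal C * ENNReal.ofReal (SN ^ (1 / q)) * ENNReal.ofReal (Yr ^ ((q - 1) / q)) := by
          rw [ENNReal.ofReal_rpow_of_nonneg hSN0 (by positivity),
            ENNReal.ofReal_rpow_of_nonneg hYr0 (by positivity)]
      _ = ENNReal.ofReal (C * SN ^ (1 / q) * Yr ^ ((q - 1) / q)) := by
          rw [← ENNReal.ofReal_mul hC0.le, ← ENNReal.ofReal_mul (by positivity)]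
  have := (ENNReal.ofReal_le_ofReal_iff (by positivity)).1 final
  exact this
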